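/- For x, z ≥ 0 and y ∈ [0, π/2], G(x, yi, z) + S(x, yi, z) = x − artanh(sinh(x)·sinh(z)/(cos(y) + cosh(x)·cosh(z))). -/

import Mathlib

open Real Complex

/-- The gap function `G` (logarithmic form, principal branch complex logarithm). -/
noncomputable def G (x y z : ℂ) : ℂ :=
  Complex.log ((Complex.exp x + Complex.exp (y + z)) /
    (Complex.exp (-x) + Complex.exp (y + z)))

/-- Complex inverse hyperbolic tangent (principal branch, imaginary part in `(-π/2, π/2]`). -/
noncomputable def artanhC (z : ℂ) : ℂ := (1/2) * Complex.log ((1 + z) / (1 - z))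

/-- The projection function `S` of the complexified McShane identity. -/
noncomputable def S (x y z : ℂ) : ℂ :=
  artanhC (Complex.sinh x * Complex.sinh y / (Complex.cosh z + Complex.cosh x * Complex.cosh y))

/-- The real inverse hyperbolic tangent. -/
noncomputable def artanh (x : ℝ) : ℝ := (1/2) * Real.log ((1 + x) / (1 - x))

lemma exp_add_exp_eq (a b : ℂ) :
    Complex.exp a + Complex.exp b = 2 * Complex.exp ((a+b)/2) * Complex.cosh ((a-b)/2) := by
  rw [Complex.cosh]
  rw [show (2 : ℂ) * Complex.exp ((a+b)/2) * ((Complex.exp ((a-b)/2) + Complex.exp (-((a-b)/2)))/2)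
      = Complex.exp ((a+b)/2) * Complex.exp ((a-b)/2)
        + Complex.exp ((a+b)/2) * Complex.exp (-((a-b)/2)) by ring]
  rw [← Complex.exp_add, ← Complex.exp_add]
  rw [show (a+b)/2 + (a-b)/2 = a by ring, show (a+b)/2 + -((a-b)/2) = b by ring]

lemma cosh_real_add_I (u v : ℝ) :
    Complex.cosh ((u : ℂ) + (v : ℂ) * Complex.I)
      = (Real.cosh u * Real.cos v : ℝ) + (Real.sinh u * Real.sin v : ℝ) * Complex.I := by
  rw [Complex.cosh_add, Complex.cosh_mul_I, Complex.sinh_mul_I,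
    ← Complex.ofReal_cosh, ← Complex.ofReal_sinh, ← Complex.ofReal_cos, ← Complex.ofReal_sin]
  push_cast
  ring

set_option maxHeartbeats 2000000 in
theorem G_add_S_of_imaginary_y (x y z : ℝ) (hx : 0 ≤ x) (hz : 0 ≤ z)
    (hy : y ∈ Set.Icc 0 (π/2)) :
    G (x : ℂ) ((y : ℂ) * Complex.I) (z : ℂ) + S (x : ℂ) ((y : ℂ) * Complex.I) (z : ℂ) =
      ((x - _root_.artanh (Real.sinh x * Real.sinh z /
        (Real.cos y + Real.cosh x * Real.cosh z))) : ℝ) := by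
  obtain ⟨hy0, hy2⟩ := hy
  set u : ℝ := (x + z)/2 with hu
  set s : ℝ := (x - z)/2 with hs
  set v : ℝ := y/2 with hv
  have hv0 : 0 ≤ v := by positivity
  have hv4 : v ≤ π/4 := by rw [hv]; linarith
  have hcosv : 0 < Real.cos v := by
    apply Real.cos_pos_of_mem_Ioo
    constructor <;> [linarith [pi_pos]; linarith [pi_pos]]
  have hsinv : 0 ≤ Real.sin v := Real.sin_nonneg_of_nonneg_of_le_pi hv0 (by linarith [pi_pos])
  have hsc : Real.sin v ≤ Real.cos v := by
    rw [← Real.cos_pi_div_two_sub]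
    apply Real.cos_le_cos_of_nonneg_of_le_pi (by linarith [pi_pos]) (by linarith [pi_pos])
    linarith
  set p : ℂ := ((Real.cosh u * Real.cos v : ℝ) : ℂ) + ((Real.sinh u * Real.sin v : ℝ) : ℂ) * Complex.I with hpdef
  set q : ℂ := ((Real.cosh s * Real.cos v : ℝ) : ℂ) - ((Real.sinh s * Real.sin v : ℝ) : ℂ) * Complex.I with hqdef
  have hpre : p.re = Real.cosh u * Real.cos v := by
    simp only [hpdef, Complex.add_re, Complex.ofReal_re, Complex.mul_re, Complex.I_re,
      Complex.I_im, Complex.ofReal_im]; ring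
  have hpim : p.im = Real.sinh u * Real.sin v := by
    simp only [hpdef, Complex.add_im, Complex.ofReal_im, Complex.mul_im, Complex.I_re,
      Complex.I_im, Complex.ofReal_re]; ring
  have hqre : q.re = Real.cosh s * Real.cos v := by
    simp only [hqdef, Complex.sub_re, Complex.ofReal_re, Complex.mul_re, Complex.I_re,
      Complex.I_im, Complex.ofReal_im]; ring
  have hqim : q.im = -(Real.sinh s * Real.sin v) := by
    simp only [hqdef, Complex.sub_im, Complex.ofReal_im, Complex.mul_im, Complex.I_re,
      Complex.I_im, Complex.ofReal_re]; ring
  have hpre_pos : 0 < p.re := by rw [hpre]; positivity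
  have hqre_pos : 0 < q.re := by rw [hqre]; positivity
  have hp0 : p ≠ 0 := by intro h; rw [h] at hpre_pos; simp at hpre_pos
  have hq0 : q ≠ 0 := by intro h; rw [h] at hqre_pos; simp at hqre_pos
  set m : ℂ := p * (starRingEnd ℂ) q with hmdef
  have hmre : m.re = Real.cosh u * Real.cosh s * Real.cos v ^ 2
      - Real.sinh u * Real.sinh s * Real.sin v ^ 2 := by
    rw [hmdef, Complex.mul_re, Complex.conj_re, Complex.conj_im, hpre, hpim, hqre, hqim]; ring
  have hmim : m.im = Real.sinh x * (Real.sin v * Real.cos v) := by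
    have hx' : x = u + s := by rw [hu, hs]; ring
    rw [hx', Real.sinh_add]
    rw [hmdef, Complex.mul_im, Complex.conj_re, Complex.conj_im, hpre, hpim, hqre, hqim]; ring
  have hmre_pos : 0 < m.re := by
    rw [hmre]
    have h2 : Real.sin v ^ 2 ≤ Real.cos v ^ 2 := by nlinarith
    have h1 : 1 ≤ Real.cosh u * Real.cosh s := by
      nlinarith [Real.one_le_cosh u, Real.one_le_cosh s]
    have hcoshsub : Real.cosh u * Real.cosh s - Real.sinh u * Real.sinh s
        = Real.cosh (u - s) := (Real.cosh_sub u s).symm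
    have ha : 0 ≤ (Real.cos v ^ 2 - Real.sin v ^ 2) * (Real.cosh u * Real.cosh s - 1) :=
      mul_nonneg (by linarith) (by linarith)
    have hb : 0 ≤ Real.sin v ^ 2 * (Real.cosh (u - s) - 1) :=
      mul_nonneg (sq_nonneg _) (by linarith [Real.one_le_cosh (u - s)])
    nlinarith [pow_pos hcosv 2]
  have hm0 : m ≠ 0 := by intro h; rw [h] at hmre_pos; simp at hmre_pos
  have hargm : |Complex.arg m| < π/2 := Complex.abs_arg_lt_pi_div_two_iff.mpr (Or.inl hmre_pos)
  -- factorizations of the numerator and denominator of the argument of G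
  have hcoshq : Complex.cosh (((x : ℂ) - ((y : ℂ) * Complex.I + (z : ℂ)))/2) = q := by
    rw [show ((x : ℂ) - ((y : ℂ) * Complex.I + (z : ℂ)))/2
        = ((s : ℝ) : ℂ) + ((-v : ℝ) : ℂ) * Complex.I by rw [hs, hv]; push_cast; ring]
    rw [cosh_real_add_I, Real.cos_neg, Real.sin_neg, hqdef]
    push_cast; ring
  have hcoshp : Complex.cosh ((-(x : ℂ) - ((y : ℂ) * Complex.I + (z : ℂ)))/2) = p := by
    rw [show (-(x : ℂ) - ((y : ℂ) * Complex.I + (z : ℂ)))/2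
        = ((-u : ℝ) : ℂ) + ((-v : ℝ) : ℂ) * Complex.I by rw [hu, hv]; push_cast; ring]
    rw [cosh_real_add_I, Real.cos_neg, Real.sin_neg, Real.cosh_neg, Real.sinh_neg, hpdef]
    push_cast; ring
  have hGval : G (x : ℂ) ((y : ℂ) * Complex.I) (z : ℂ)
      = Complex.log (((Real.exp x : ℝ) : ℂ) * q / p) := by
    rw [G, exp_add_exp_eq, exp_add_exp_eq, hcoshq, hcoshp]
    congr 1
    rw [Complex.ofReal_exp]
    rw [show ((x : ℂ) + ((y : ℂ) * Complex.I + (z : ℂ)))/2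
        = (x : ℂ) + (-(x : ℂ) + ((y : ℂ) * Complex.I + (z : ℂ)))/2 by ring]
    rw [Complex.exp_add]
    field_simp [Complex.exp_ne_zero]
  -- the S side
  set E : ℝ := Real.cosh z + Real.cosh x * Real.cos y with hE
  have hcosy : 0 ≤ Real.cos y := Real.cos_nonneg_of_mem_Icc ⟨by linarith [pi_pos], hy2⟩
  have hEpos : 0 < E := by
    rw [hE]
    have := Real.one_le_cosh z
    have : 0 ≤ Real.cosh x * Real.cos y := mul_nonneg (Real.cosh_pos x).le hcosy
    linarith [Real.one_le_cosh z]
  have hEc : ((E : ℝ) : ℂ) ≠ 0 := by exact_mod_cast hEpos.ne'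
  have hxus : x = u + s := by rw [hu, hs]; ring
  have hzus : z = u - s := by rw [hu, hs]; ring
  have hyv : y = v + v := by rw [hv]; ring
  have hm2re : 2 * m.re = E := by
    rw [hmre, hE, hxus, hzus, hyv, Real.cosh_sub, Real.cosh_add, Real.cos_add]
    linear_combination (Real.cosh u * Real.cosh s - Real.sinh u * Real.sinh s)
      * (Real.sin_sq_add_cos_sq v)
  have hm2im : 2 * m.im = Real.sinh x * Real.sin y := by
    rw [hmim, hyv, Real.sin_add]; ring
  have hm2 : (2 : ℂ) * m = ((E : ℝ) : ℂ) + ((Real.sinh x * Real.sin y : ℝ) : ℂ) * Complex.I := by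
    apply Complex.ext
    · simpa using hm2re
    · simpa [Complex.sinh_ofReal_re, Complex.sin_ofReal_re] using hm2im
  have hcm0 : (starRingEnd ℂ) m ≠ 0 := by
    simpa using hm0
  have hconjm2 : (2 : ℂ) * (starRingEnd ℂ) m
      = ((E : ℝ) : ℂ) - ((Real.sinh x * Real.sin y : ℝ) : ℂ) * Complex.I := by
    have h := congrArg (starRingEnd ℂ) hm2
    simp only [map_mul, map_ofNat, map_add, Complex.conj_ofReal, Complex.conj_I,
      Complex.conj_conj, hmdef] at h ⊢
    linear_combination h
  have hSval : S (x : ℂ) ((y : ℂ) * Complex.I) (z : ℂ)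
      = (1/2 : ℂ) * Complex.log (m / (starRingEnd ℂ) m) := by
    rw [S, artanhC]
    congr 2
    have hwval : Complex.sinh (x : ℂ) * Complex.sinh ((y : ℂ) * Complex.I)
        / (Complex.cosh (z : ℂ) + Complex.cosh (x : ℂ) * Complex.cosh ((y : ℂ) * Complex.I))
        = ((Real.sinh x * Real.sin y : ℝ) : ℂ) * Complex.I / ((E : ℝ) : ℂ) := by
      rw [Complex.sinh_mul_I, Complex.cosh_mul_I]
      rw [hE]
      congr 1
      · push_cast; ring
      · push_cast; ring
    rw [hwval]
    have h1p : (1 : ℂ) + ((Real.sinh x * Real.sin y : ℝ) : ℂ) * Complex.I / ((E : ℝ) : ℂ)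
        = 2 * m / ((E : ℝ) : ℂ) := by
      rw [hm2, add_div, div_self hEc]
    have h1m : (1 : ℂ) - ((Real.sinh x * Real.sin y : ℝ) : ℂ) * Complex.I / ((E : ℝ) : ℂ)
        = 2 * (starRingEnd ℂ) m / ((E : ℝ) : ℂ) := by
      rw [hconjm2, sub_div, div_self hEc]
    rw [h1p, h1m, div_div_div_comm, div_self hEc, div_one,
      mul_div_mul_left _ _ (by norm_num : (2 : ℂ) ≠ 0)]
  -- the real artanh computation
  set D : ℝ := Real.cos y + Real.cosh x * Real.cosh z with hD
  have hDpos : 0 < D := by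
    rw [hD]; nlinarith [Real.one_le_cosh x, Real.one_le_cosh z, hcosy]
  have hnp : 2 * Complex.normSq p = Real.cos y + Real.cosh (x + z) := by
    rw [Complex.normSq_apply, hpre, hpim, hyv, Real.cos_add,
      show x + z = u + u by rw [hu]; ring, Real.cosh_add]
    linear_combination (2 * Real.cos v ^ 2 - 1) * (Real.cosh_sq_sub_sinh_sq u)
      + (2 * Real.sinh u ^ 2 + 1) * (Real.sin_sq_add_cos_sq v)
  have hnq : 2 * Complex.normSq q = Real.cos y + Real.cosh (x - z) := by
    rw [Complex.normSq_apply, hqre, hqim, hyv, Real.cos_add,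
      show x - z = s + s by rw [hs]; ring, Real.cosh_add]
    linear_combination (2 * Real.cos v ^ 2 - 1) * (Real.cosh_sq_sub_sinh_sq s)
      + (2 * Real.sinh s ^ 2 + 1) * (Real.sin_sq_add_cos_sq v)
  have hnp_pos : 0 < Complex.normSq p := Complex.normSq_pos.mpr hp0
  have hnq_pos : 0 < Complex.normSq q := Complex.normSq_pos.mpr hq0
  have habsp_pos : 0 < ‖p‖ := norm_pos_iff.mpr hp0
  have habsq_pos : 0 < ‖q‖ := norm_pos_iff.mpr hq0
  have hartanh : _root_.artanh (Real.sinh x * Real.sinh z / D)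
      = Real.log ‖p‖ - Real.log ‖q‖ := by
    rw [_root_.artanh]
    have h1 : 1 + Real.sinh x * Real.sinh z / D = 2 * Complex.normSq p / D := by
      rw [hnp, Real.cosh_add]
      field_simp
      rw [hD]; ring
    have h2 : 1 - Real.sinh x * Real.sinh z / D = 2 * Complex.normSq q / D := by
      rw [hnq, Real.cosh_sub]
      field_simp
      rw [hD]; ring
    rw [h1, h2, div_div_div_comm, div_self hDpos.ne', div_one,
      mul_div_mul_left _ _ (by norm_num : (2 : ℝ) ≠ 0)]
    rw [← Complex.sq_norm, ← Complex.sq_norm,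
      Real.log_div (pow_ne_zero 2 habsp_pos.ne') (pow_ne_zero 2 habsq_pos.ne'),
      Real.log_pow, Real.log_pow]
    push_cast; ring
  -- the argument computations
  have hdivreal : ∀ (w : ℂ) (r : ℝ), 0 < r → Complex.arg (w / (r : ℂ)) = Complex.arg w := by
    intro w r hr
    rw [div_eq_inv_mul, show ((r : ℂ))⁻¹ = ((r⁻¹ : ℝ) : ℂ) by push_cast; ring,
      Complex.arg_real_mul _ (inv_pos.mpr hr)]
  have hargpi : Complex.arg m ≠ π := by
    intro hpi; rw [hpi, abs_of_pos pi_pos] at hargm; linarith [pi_pos]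
  have hargA : Complex.arg (((Real.exp x : ℝ) : ℂ) * q / p) = - Complex.arg m := by
    rw [mul_div_assoc, Complex.arg_real_mul _ (Real.exp_pos x)]
    have hqp : q / p = (q * (starRingEnd ℂ) p) / ((Complex.normSq p : ℝ) : ℂ) := by
      rw [← Complex.mul_conj, mul_div_mul_right _ _ (by simpa using hp0 : (starRingEnd ℂ) p ≠ 0)]
    rw [hqp, hdivreal _ _ hnp_pos,
      show q * (starRingEnd ℂ) p = (starRingEnd ℂ) m by
        rw [hmdef, map_mul, Complex.conj_conj]; ring,
      Complex.arg_conj]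
    simp [hargpi]
  have hargmm : Complex.arg (m / (starRingEnd ℂ) m) = 2 * Complex.arg m := by
    obtain ⟨hl, hr⟩ := abs_lt.mp hargm
    have hmm : m / (starRingEnd ℂ) m = (m * m) / ((Complex.normSq m : ℝ) : ℂ) := by
      rw [← Complex.mul_conj, mul_div_mul_left _ _ hm0]
    rw [hmm, hdivreal _ _ (Complex.normSq_pos.mpr hm0),
      Complex.arg_mul hm0 hm0 ⟨by linarith [pi_pos], by linarith [pi_pos]⟩]
    ring
  have habsmm : ‖m / (starRingEnd ℂ) m‖ = 1 := by
    rw [norm_div, Complex.norm_conj, div_self (norm_ne_zero_iff.mpr hm0)]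
  have habsA : ‖((Real.exp x : ℝ) : ℂ) * q / p‖
      = Real.exp x * ‖q‖ / ‖p‖ := by
    rw [norm_div, norm_mul, Complex.norm_real, Real.norm_eq_abs, abs_of_pos (Real.exp_pos x)]
  -- conclusion
  rw [hGval, hSval]
  apply Complex.ext
  · rw [Complex.add_re, Complex.mul_re, Complex.log_re, Complex.log_re, habsmm, habsA,
      Real.log_one, Complex.log_im, hargmm, Complex.ofReal_re,
      Real.log_div (by positivity) habsp_pos.ne', Real.log_mul (Real.exp_pos x).ne'
        habsq_pos.ne', Real.log_exp, hartanh]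
    norm_num
    ring
  · rw [Complex.add_im, Complex.mul_im, Complex.log_im, Complex.log_im, hargA, hargmm,
      Complex.log_re, habsmm, Real.log_one, Complex.ofReal_im]
    rw [show ((1:ℂ)/2).re = 1/2 by norm_num, show ((1:ℂ)/2).im = 0 by norm_num]
    linarith
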